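/- Let be the 4×4 real matrix with rows (0,1,0,0), (1/(D_n τ_n), −c/D_n, (1/D_n)(1/τ_n − 1/τ_hn), 0), (0,0,0,1), (0,0, 1/(D_h τ_hn), −c/D_h), where D_n, D_h, τ_n, τ_hn, c > 0. Then the characteristic polynomial of equals (1/(D_n D_h))·(D_n λ² + cλ − 1/τ_n)·(D_h λ² + cλ − 1/τ_hn), and has exactly two eigenvalues with positive real part and two with negative real part (all four real). -/

import Mathlib

theorem stmt_9 (Dn Dh τn τhn c : ℝ) (hDn : 0 < Dn) (hDh : 0 < Dh)
    (hτn : 0 < τn) (hτhn : 0 < τhn) (hc : 0 < c)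
    (A : Matrix (Fin 4) (Fin 4) ℝ)
    (hA : A = Matrix.of
      ![![0, 1, 0, 0],
        ![1 / (Dn * τn), -(c / Dn), (1 / Dn) * (1 / τn - 1 / τhn), 0],
        ![0, 0, 0, 1],
        ![0, 0, 1 / (Dh * τhn), -(c / Dh)]]) :
    (∀ lam : ℝ,
      (A - lam • (1 : Matrix (Fin 4) (Fin 4) ℝ)).det =
        (1 / (Dn * Dh)) * (Dn * lam ^ 2 + c * lam - 1 / τn) *
          (Dh * lam ^ 2 + c * lam - 1 / τhn)) ∧
    ∃ μ₁ μ₂ μ₃ μ₄ : ℝ, μ₁ < 0 ∧ μ₂ < 0 ∧ 0 < μ₃ ∧ 0 < μ₄ ∧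
      ∀ lam : ℝ,
        (A - lam • (1 : Matrix (Fin 4) (Fin 4) ℝ)).det =
          (lam - μ₁) * (lam - μ₂) * (lam - μ₃) * (lam - μ₄) := by
  have hDn' := hDn.ne'
  have hDh' := hDh.ne'
  have hτn' := hτn.ne'
  have hτhn' := hτhn.ne'
  have key : ∀ lam : ℝ,
      (A - lam • (1 : Matrix (Fin 4) (Fin 4) ℝ)).det =
        (1 / (Dn * Dh)) * (Dn * lam ^ 2 + c * lam - 1 / τn) *
          (Dh * lam ^ 2 + c * lam - 1 / τhn) := by
    intro lam
    subst hA
    simp (config := { decide := true }) [Matrix.det_succ_row_zero, Fin.sum_univ_succ,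
      Fin.succAbove, Matrix.sub_apply, Matrix.smul_apply, Matrix.one_apply]
    field_simp
    ring
  refine ⟨key, ?_⟩
  set s1 := Real.sqrt (c ^ 2 + 4 * Dn / τn) with hs1def
  set s2 := Real.sqrt (c ^ 2 + 4 * Dh / τhn) with hs2def
  have hs1 : s1 ^ 2 = c ^ 2 + 4 * Dn / τn := Real.sq_sqrt (by positivity)
  have hs2 : s2 ^ 2 = c ^ 2 + 4 * Dh / τhn := Real.sq_sqrt (by positivity)
  have hs1nn : 0 ≤ s1 := Real.sqrt_nonneg _
  have hs2nn : 0 ≤ s2 := Real.sqrt_nonneg _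
  have h4n : 0 < 4 * Dn / τn := by positivity
  have h4h : 0 < 4 * Dh / τhn := by positivity
  have hs1c : c < s1 := by nlinarith
  have hs2c : c < s2 := by nlinarith
  have hs1' : τn * s1 ^ 2 = τn * c ^ 2 + 4 * Dn := by rw [hs1]; field_simp
  have hs2' : τhn * s2 ^ 2 = τhn * c ^ 2 + 4 * Dh := by rw [hs2]; field_simp
  have f1 : ∀ lam : ℝ, Dn * lam ^ 2 + c * lam - 1 / τn =
      Dn * (lam - (-c - s1) / (2 * Dn)) * (lam - (-c + s1) / (2 * Dn)) := by
    intro lam; field_simp; linear_combination hs1'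
  have f2 : ∀ lam : ℝ, Dh * lam ^ 2 + c * lam - 1 / τhn =
      Dh * (lam - (-c - s2) / (2 * Dh)) * (lam - (-c + s2) / (2 * Dh)) := by
    intro lam; field_simp; linear_combination hs2'
  refine ⟨(-c - s1) / (2 * Dn), (-c - s2) / (2 * Dh),
          (-c + s1) / (2 * Dn), (-c + s2) / (2 * Dh), ?_, ?_, ?_, ?_, ?_⟩
  · exact div_neg_of_neg_of_pos (by linarith) (by linarith)
  · exact div_neg_of_neg_of_pos (by linarith) (by linarith)
  · exact div_pos (by linarith) (by linarith)
  · exact div_pos (by linarith) (by linarith)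
  · intro lam
    rw [key lam, f1 lam, f2 lam]
    field_simp
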